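/- Let (μₙ)_{n≥0} be a consistent family of measures, μₙ on (Ω_{Vₙ}, B_{Vₙ}), and suppose there exist pairwise disjoint cylinder sets A_l = π_{V_{n_l}}^{-1}(A'_l), with A'_l ⊆ Ω_{V_{n_l}} measurable, μ_{n_l}(A'_l) < ∞, and ⋃_{l≥1} A_l = Ω. Let μ denote the (well-defined) set function on cylinder sets given by μ(π_{V_m}^{-1}(E)) = μ_m(E). Then the family (μₙ) extends to a (necessarily unique) σ-additive measure μ̄ on (Ω, B) with π_{Vₙ}(μ̄) = μₙ for all n if and only if μ(E) = Σ_{l≥1} μ(E ∩ A_l) for every cylinder set E. -/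

import Mathlib

open MeasureTheory

/-- Restriction map `π_Λ : Ω_Δ → Ω_Λ` for `Λ ⊆ Δ` finite subsets of `V`. -/
def restr {V Φ : Type*} {Λ Δ : Finset V} (h : Λ ⊆ Δ)
    (σ : {x // x ∈ Δ} → Φ) (x : {x // x ∈ Λ}) : Φ :=
  σ ⟨x.1, h x.2⟩

/-- Restriction map `π_Λ : Ω → Ω_Λ` for a finite subset `Λ` of `V`. -/
def restrV {V Φ : Type*} (Λ : Finset V)
    (σ : V → Φ) (x : {x // x ∈ Λ}) : Φ :=
  σ x.1

open ENNReal

section Aux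

variable {V Φ : Type*}

lemma restr_comp_restrV {Λ Δ : Finset V} (h : Λ ⊆ Δ) :
    restr (Φ := Φ) h ∘ restrV Δ = restrV Λ := rfl

lemma restr_comp_restr {Λ Δ Γ : Finset V} (h1 : Λ ⊆ Δ) (h2 : Δ ⊆ Γ) :
    restr (Φ := Φ) h1 ∘ restr h2 = restr (h1.trans h2) := rfl

lemma measurable_restr [MeasurableSpace Φ] {Λ Δ : Finset V} (h : Λ ⊆ Δ) :
    Measurable (restr (Φ := Φ) h) :=
  measurable_pi_lambda _ fun _ => measurable_pi_apply _

lemma measurable_restrV [MeasurableSpace Φ] (Λ : Finset V) :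
    Measurable (restrV (Φ := Φ) Λ) :=
  measurable_pi_lambda _ fun _ => measurable_pi_apply _

lemma surjective_restrV [Nonempty Φ] (Λ : Finset V) :
    Function.Surjective (restrV (Φ := Φ) Λ) := by
  classical
  intro f
  exact ⟨fun v => if h : v ∈ Λ then f ⟨v, h⟩ else Classical.arbitrary Φ, by
    funext x; simp [restrV]⟩

lemma subset_of_preimage_subset {α β : Type*} {f : α → β} (hf : Function.Surjective f)
    {A B : Set β} (h : f ⁻¹' A ⊆ f ⁻¹' B) : A ⊆ B := by
  intro b hb
  obtain ⟨a, rfl⟩ := hf b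
  exact h hb

lemma eq_of_preimage_eq {α β : Type*} {f : α → β} (hf : Function.Surjective f)
    {A B : Set β} (h : f ⁻¹' A = f ⁻¹' B) : A = B :=
  le_antisymm (subset_of_preimage_subset hf h.le) (subset_of_preimage_subset hf h.ge)

lemma cyl_lift {Vn : ℕ → Finset V} (hmono : ∀ i j, i ≤ j → Vn i ⊆ Vn j)
    {i N : ℕ} (h : i ≤ N) (E : Set ({x // x ∈ Vn i} → Φ)) :
    restrV (Vn i) ⁻¹' E = restrV (Vn N) ⁻¹' (restr (hmono i N h) ⁻¹' E) := by
  rw [← restr_comp_restrV (hmono i N h), Set.preimage_comp]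

/-- The collection of cylinder sets with base over some `Vn n`. -/
def cylSets (Vn : ℕ → Finset V) (Φ : Type*) : Set (Set (V → Φ)) :=
  {s | ∃ (n : ℕ) (E : Set ({x // x ∈ Vn n} → Φ)), s = restrV (Vn n) ⁻¹' E}

variable {Vn : ℕ → Finset V}

lemma cylSets_def {s : Set (V → Φ)} :
    s ∈ cylSets Vn Φ ↔ ∃ n E, s = restrV (Vn n) ⁻¹' E := Iff.rfl

lemma isPiSystem_cylSets (hmono : ∀ i j, i ≤ j → Vn i ⊆ Vn j) :
    IsPiSystem (cylSets Vn Φ) := by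
  rintro s ⟨i, E, rfl⟩ t ⟨j, F, rfl⟩ -
  refine ⟨max i j, restr (hmono i _ (le_max_left i j)) ⁻¹' E ∩
    restr (hmono j _ (le_max_right i j)) ⁻¹' F, ?_⟩
  rw [Set.preimage_inter, ← cyl_lift hmono (le_max_left i j),
    ← cyl_lift hmono (le_max_right i j)]

lemma generateFrom_cylSets [Countable Φ] [MeasurableSpace Φ] [DiscreteMeasurableSpace Φ]
    (hcover : ∀ x : V, ∃ n, x ∈ Vn n) :
    (inferInstance : MeasurableSpace (V → Φ)) =
      MeasurableSpace.generateFrom (cylSets Vn Φ) := by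
  refine le_antisymm ?_ ?_
  · show MeasurableSpace.pi ≤ _
    refine iSup_le fun v => ?_
    intro s hs
    obtain ⟨B, -, rfl⟩ := hs
    obtain ⟨n, hn⟩ := hcover v
    exact MeasurableSpace.measurableSet_generateFrom
      ⟨n, (fun f : {x // x ∈ Vn n} → Φ => f ⟨v, hn⟩) ⁻¹' B, rfl⟩
  · refine MeasurableSpace.generateFrom_le ?_
    rintro s ⟨n, E, rfl⟩
    exact measurable_restrV (Vn n) .of_discrete

end Aux

section Content

variable {Φ V : Type*} [Countable Φ] [Nonempty Φ] [MeasurableSpace Φ] [DiscreteMeasurableSpace Φ]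
  {Vn : ℕ → Finset V}

/-- finite approximation from inside for a finite measure on a countable discrete space -/
lemma exists_finite_approx {α : Type*} [MeasurableSpace α] [Countable α]
    [MeasurableSingletonClass α] (τ : Measure α) (hτ : τ Set.univ ≠ ⊤)
    (E : Set α) {δ : ℝ≥0∞} (hδ : δ ≠ 0) :
    ∃ F : Set α, F.Finite ∧ F ⊆ E ∧ τ (E \ F) ≤ δ := by
  by_cases hle : τ E ≤ δ
  · exact ⟨∅, Set.finite_empty, Set.empty_subset _, by simpa using hle⟩
  push_neg at hle
  have hEfin : τ E ≠ ⊤ := fun h => hτ (top_le_iff.mp (h ▸ measure_mono (Set.subset_univ E)))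
  have hEeq : τ E = ∑' x : E, τ {(x : α)} := by
    have : E = ⋃ x : E, {(x : α)} := by simp
    rw [this, measure_iUnion]
    · rw [← this]
    · intro x y hxy
      simp only [Set.disjoint_singleton]
      exact fun h => hxy (Subtype.ext h)
    · exact fun _ => measurableSet_singleton _
  have hlt : τ E - δ < τ E :=
    ENNReal.sub_lt_self hEfin ((lt_of_le_of_lt (zero_le : 0 ≤ δ) hle).ne') hδ
  have hlt' : τ E - δ < ⨆ s : Finset E, ∑ x ∈ s, τ {(x : α)} := by
    rw [← ENNReal.tsum_eq_iSup_sum, ← hEeq]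
    exact hlt
  obtain ⟨G, hG⟩ := lt_iSup_iff.mp hlt'
  classical
  set F0 : Finset α := G.image (fun x : E => (x : α)) with hF0
  have hFE : (↑F0 : Set α) ⊆ E := by
    intro a ha
    obtain ⟨x, -, rfl⟩ := Finset.mem_image.mp (by exact_mod_cast ha)
    exact x.2
  refine ⟨↑F0, F0.finite_toSet, hFE, ?_⟩
  have hFmeas : τ ↑F0 ≥ ∑ x ∈ G, τ {(x : α)} := by
    have hFU : (↑F0 : Set α) = ⋃ x ∈ G, {(x : α)} := by
      ext a; simp [hF0]
    rw [hFU, measure_biUnion_finset]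
    · intro x _ y _ hxy
      simp only [Function.onFun, Set.disjoint_singleton]
      exact fun h => hxy (Subtype.ext h)
    · exact fun _ _ => measurableSet_singleton _
  have h1 : τ E - δ ≤ τ ↑F0 := le_trans hG.le hFmeas
  have h2 : τ E ≤ τ ↑F0 + δ := by
    rw [← tsub_le_iff_right]
    exact h1
  have h3 : τ (E \ ↑F0) = τ E - τ ↑F0 :=
    measure_diff hFE (Set.Finite.measurableSet F0.finite_toSet).nullMeasurableSet
      (fun h => hEfin (top_le_iff.mp (h ▸ measure_mono hFE)))
  rw [h3]
  exact tsub_le_iff_left.mpr h2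

open scoped Classical in
variable (Vn) in
/-- The cylinder content associated to a consistent family. -/
noncomputable def mu0 (τ : ∀ n : ℕ, Measure ({x // x ∈ Vn n} → Φ)) :
    Set (V → Φ) → ℝ≥0∞ :=
  fun s => if h : s ∈ cylSets Vn Φ then τ h.choose h.choose_spec.choose else ⊤

variable (hmono : ∀ i j, i ≤ j → Vn i ⊆ Vn j)
  {τ : ∀ n : ℕ, Measure ({x // x ∈ Vn n} → Φ)}
  (hcons : ∀ i j (h : i ≤ j), (τ j).map (restr (hmono i j h)) = τ i)

include hmono hcons in
lemma tau_eq_tau {i j : ℕ} {E : Set ({x // x ∈ Vn i} → Φ)} {F : Set ({x // x ∈ Vn j} → Φ)}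
    (h : restrV (Vn i) ⁻¹' E = restrV (Vn j) ⁻¹' F) : τ i E = τ j F := by
  have key : ∀ {a b : ℕ} (hab : a ≤ b) {A : Set ({x // x ∈ Vn a} → Φ)}
      {B : Set ({x // x ∈ Vn b} → Φ)},
      restrV (Vn a) ⁻¹' A = restrV (Vn b) ⁻¹' B → τ a A = τ b B := by
    intro a b hab A B hAB
    rw [cyl_lift hmono hab] at hAB
    have hEB : restr (hmono a b hab) ⁻¹' A = B :=
      eq_of_preimage_eq (surjective_restrV (Vn b)) hAB
    rw [← hEB, ← hcons a b hab, Measure.map_apply (measurable_restr _) .of_discrete]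
  rcases le_total i j with hij | hij
  · exact key hij h
  · exact (key hij h.symm).symm

include hmono hcons in
lemma mu0_eq (n : ℕ) (E : Set ({x // x ∈ Vn n} → Φ)) :
    mu0 Vn τ (restrV (Vn n) ⁻¹' E) = τ n E := by
  have h : restrV (Vn n) ⁻¹' E ∈ cylSets Vn Φ := ⟨n, E, rfl⟩
  simp only [mu0]
  rw [dif_pos h]
  exact tau_eq_tau hmono hcons (h.choose_spec.choose_spec.symm)

omit [Countable Φ] [Nonempty Φ] [DiscreteMeasurableSpace Φ] in
lemma mu0_not_cyl {s : Set (V → Φ)} (h : s ∉ cylSets Vn Φ) : mu0 Vn τ s = ⊤ := by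
  simp only [mu0]
  rw [dif_neg h]

include hmono hcons in
lemma mu0_empty : mu0 Vn τ ∅ = 0 := by
  have : (∅ : Set (V → Φ)) = restrV (Vn 0) ⁻¹' ∅ := by simp
  rw [this, mu0_eq hmono hcons]
  simp

include hmono hcons in
lemma mu0_ne_top (hfin : ∀ n, τ n Set.univ ≠ ⊤) {s : Set (V → Φ)} (hs : s ∈ cylSets Vn Φ) :
    mu0 Vn τ s ≠ ⊤ := by
  obtain ⟨n, E, rfl⟩ := hs
  rw [mu0_eq hmono hcons]
  exact fun h => hfin n (top_le_iff.mp (h ▸ measure_mono (Set.subset_univ E)))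

include hmono hcons in
/-- finite subadditivity of the content, with an extra set. -/
lemma mu0_le_sum (m : ℕ) (s : Set (V → Φ)) (t : ℕ → Set (V → Φ)) (w : Set (V → Φ))
    (hs : s ∈ cylSets Vn Φ) (ht : ∀ j, t j ∈ cylSets Vn Φ) (hw : w ∈ cylSets Vn Φ)
    (hsub : s ⊆ (⋃ j ∈ Finset.range m, t j) ∪ w) :
    mu0 Vn τ s ≤ ∑ j ∈ Finset.range m, mu0 Vn τ (t j) + mu0 Vn τ w := by
  classical
  obtain ⟨ns, Es, rfl⟩ := hs
  obtain ⟨nw, Ew, rfl⟩ := hw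
  choose nt Et hte using ht
  set N : ℕ := ns ⊔ nw ⊔ (Finset.range m).sup nt with hN
  have hns : ns ≤ N := le_sup_of_le_left le_sup_left
  have hnw : nw ≤ N := le_sup_of_le_left le_sup_right
  have hnt : ∀ j ∈ Finset.range m, nt j ≤ N := fun j hj =>
    le_sup_of_le_right (Finset.le_sup hj)
  set g : ℕ → Set ({x // x ∈ Vn N} → Φ) := fun j =>
    if h : nt j ≤ N then restr (hmono (nt j) N h) ⁻¹' Et j else ∅ with hg
  have hgj : ∀ j ∈ Finset.range m, t j = restrV (Vn N) ⁻¹' g j := by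
    intro j hj
    rw [hg]
    simp only
    rw [dif_pos (hnt j hj), hte j, cyl_lift hmono (hnt j hj)]
  rw [cyl_lift hmono hns, cyl_lift hmono hnw, mu0_eq hmono hcons, mu0_eq hmono hcons]
  have htN : ∀ j ∈ Finset.range m, mu0 Vn τ (t j) = τ N (g j) := by
    intro j hj
    rw [hgj j hj, mu0_eq hmono hcons]
  rw [Finset.sum_congr rfl htN]
  have hUsub : (⋃ j ∈ Finset.range m, t j) ⊆
      restrV (Vn N) ⁻¹' (⋃ j ∈ Finset.range m, g j) := by
    refine Set.iUnion₂_subset fun j hj => ?_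
    rw [hgj j hj]
    exact Set.preimage_mono (Set.subset_biUnion_of_mem hj)
  have hsub' : restr (hmono ns N hns) ⁻¹' Es ⊆ (⋃ j ∈ Finset.range m, g j) ∪
      restr (hmono nw N hnw) ⁻¹' Ew := by
    refine subset_of_preimage_subset (surjective_restrV (Vn N)) ?_
    rw [Set.preimage_union, ← cyl_lift hmono hns]
    exact hsub.trans (Set.union_subset_union hUsub (cyl_lift hmono hnw Ew).le)
  calc τ N (restr (hmono ns N hns) ⁻¹' Es)
      ≤ τ N ((⋃ j ∈ Finset.range m, g j) ∪ restr (hmono nw N hnw) ⁻¹' Ew) :=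
        measure_mono hsub'
    _ ≤ τ N (⋃ j ∈ Finset.range m, g j) + τ N (restr (hmono nw N hnw) ⁻¹' Ew) :=
        measure_union_le _ _
    _ ≤ _ := by
        gcongr
        exact measure_biUnion_finset_le _ _

end Content

section Continuity

variable {Φ V : Type*} [Countable Φ] [Nonempty Φ] [MeasurableSpace Φ] [DiscreteMeasurableSpace Φ]
  {Vn : ℕ → Finset V}
  (hmono : ∀ i j, i ≤ j → Vn i ⊆ Vn j)
  {τ : ∀ n : ℕ, Measure ({x // x ∈ Vn n} → Φ)}
  (hcons : ∀ i j (h : i ≤ j), (τ j).map (restr (hmono i j h)) = τ i)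
  (hfin : ∀ n, τ n Set.univ ≠ ⊤)

include hmono hcons hfin in
lemma mu0_iInf_eq_zero (r : ℕ → Set (V → Φ)) (hcyl : ∀ k, r k ∈ cylSets Vn Φ)
    (hdec : ∀ j k, j ≤ k → r k ⊆ r j) (hempty : ⋂ k, r k = ∅) :
    ⨅ k, mu0 Vn τ (r k) = 0 := by
  classical
  by_contra hne
  set ε := ⨅ k, mu0 Vn τ (r k) with hε
  have hεpos : 0 < ε := pos_iff_ne_zero.mpr hne
  choose n E hrE using hcyl
  have hεle : ∀ k, ε ≤ mu0 Vn τ (r k) := fun k => iInf_le _ k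
  obtain ⟨δ, hδpos, hδsum⟩ := ENNReal.exists_pos_sum_of_countable hεpos.ne' ℕ
  choose F hFfin hFsub hFsmall using fun k =>
    exists_finite_approx (τ (n k)) (hfin (n k)) (E k)
      (show ((δ k : ℝ≥0∞)) ≠ 0 by exact_mod_cast (hδpos k).ne')
  set D : ℕ → Set (V → Φ) := fun k =>
    r k ∩ ⋂ j ∈ Finset.range (k+1), restrV (Vn (n j)) ⁻¹' F j with hD
  have hDne : ∀ k, (D k).Nonempty := by
    intro k
    rw [Set.nonempty_iff_ne_empty]
    intro hDk
    have hsub : r k ⊆ (⋃ j ∈ Finset.range (k+1),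
        restrV (Vn (n j)) ⁻¹' (E j \ F j)) ∪ (∅ : Set (V → Φ)) := by
      intro x hx
      by_cases hall : ∀ j ∈ Finset.range (k+1), restrV (Vn (n j)) x ∈ F j
      · exfalso
        have hxD : x ∈ D k := ⟨hx, Set.mem_iInter₂.mpr hall⟩
        rw [hDk] at hxD
        exact hxD
      · push_neg at hall
        obtain ⟨j, hj, hjF⟩ := hall
        refine Set.mem_union_left _ (Set.mem_biUnion hj ?_)
        have hxj : x ∈ r j := hdec j k (Nat.lt_succ_iff.mp (Finset.mem_range.mp hj)) hx
        rw [hrE j] at hxj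
        exact ⟨hxj, hjF⟩
    have hle := mu0_le_sum hmono hcons (k+1) (r k)
      (fun j => restrV (Vn (n j)) ⁻¹' (E j \ F j)) ∅
      (⟨n k, E k, hrE k⟩) (fun j => ⟨n j, E j \ F j, rfl⟩)
      (⟨0, ∅, by simp⟩) (by rw [hrE k] at hsub ⊢; exact hsub)
    rw [mu0_empty hmono hcons, add_zero] at hle
    have hterm : ∀ j ∈ Finset.range (k+1),
        mu0 Vn τ (restrV (Vn (n j)) ⁻¹' (E j \ F j)) ≤ (δ j : ℝ≥0∞) := by
      intro j _
      rw [mu0_eq hmono hcons]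
      exact hFsmall j
    have hlt : mu0 Vn τ (r k) < ε := by
      calc mu0 Vn τ (r k) ≤ ∑ j ∈ Finset.range (k+1),
            mu0 Vn τ (restrV (Vn (n j)) ⁻¹' (E j \ F j)) := by
            rw [hrE k] at hle ⊢; exact hle
        _ ≤ ∑ j ∈ Finset.range (k+1), (δ j : ℝ≥0∞) := Finset.sum_le_sum hterm
        _ ≤ ∑' j, (δ j : ℝ≥0∞) := ENNReal.sum_le_tsum _
        _ < ε := hδsum
    exact absurd (hεle k) (not_le.mpr hlt)
  choose ω hω using hDne
  set 𝒰 : Ultrafilter ℕ := Ultrafilter.of Filter.atTop with h𝒰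
  have hatTop : ∀ s : Set ℕ, s ∈ (Filter.atTop : Filter ℕ) → s ∈ 𝒰 :=
    fun s hs => Ultrafilter.of_le _ hs
  have hmemD : ∀ j k, j ≤ k → restrV (Vn (n j)) (ω k) ∈ F j := by
    intro j k hjk
    exact Set.mem_iInter₂.mp (hω k).2 j (Finset.mem_range.mpr (Nat.lt_succ_of_le hjk))
  have hex : ∀ v : V, (∃ j, v ∈ Vn (n j)) → ∃ a : Φ, {k | ω k v = a} ∈ 𝒰 := by
    rintro v ⟨j, hv⟩
    set S : Set Φ := (fun f : {x // x ∈ Vn (n j)} → Φ => f ⟨v, hv⟩) '' (F j) with hS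
    have hSfin : S.Finite := (hFfin j).image _
    have hSmem : {k | ω k v ∈ S} ∈ 𝒰 := by
      refine Filter.mem_of_superset (hatTop (Set.Ici j) (Filter.Ici_mem_atTop j)) ?_
      intro k hk
      exact ⟨_, hmemD j k hk, rfl⟩
    have hmap : S ∈ 𝒰.map (fun k => ω k v) := hSmem
    obtain ⟨a, -, ha⟩ := Ultrafilter.eq_pure_of_finite_mem hSfin hmap
    refine ⟨a, ?_⟩
    have : {a} ∈ 𝒰.map (fun k => ω k v) := by
      rw [ha]
      simp
    exact this
  set σ : V → Φ := fun v =>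
    if h : ∃ a : Φ, {k | ω k v = a} ∈ 𝒰 then h.choose else Classical.arbitrary Φ with hσ
  have hσspec : ∀ v : V, (∃ j, v ∈ Vn (n j)) → {k | ω k v = σ v} ∈ 𝒰 := by
    intro v hv
    have h := hex v hv
    rw [hσ]
    simp only
    rw [dif_pos h]
    exact h.choose_spec
  have hσr : ∀ j, σ ∈ r j := by
    intro j
    have hT : (Set.Ici j ∩ ⋂ x : {x // x ∈ Vn (n j)}, {k | ω k x.1 = σ x.1}) ∈ 𝒰 := by
      refine Filter.inter_mem (hatTop _ (Filter.Ici_mem_atTop j)) ?_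
      exact Filter.iInter_mem.mpr fun x => hσspec x.1 ⟨j, x.2⟩
    obtain ⟨k, hk⟩ := 𝒰.nonempty_of_mem hT
    have hkeq : restrV (Vn (n j)) σ = restrV (Vn (n j)) (ω k) := by
      funext x
      exact (Set.mem_iInter.mp hk.2 x).symm
    have hωr : ω k ∈ r j := hdec j k hk.1 (hω k).1
    rw [hrE j] at hωr ⊢
    show restrV (Vn (n j)) σ ∈ E j
    rw [hkeq]
    exact hωr
  have hmem : σ ∈ ⋂ k, r k := Set.mem_iInter.mpr hσr
  rw [hempty] at hmem
  exact hmem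

end Continuity

section Extension

variable {Φ V : Type*} [Countable Φ] [Nonempty Φ] [MeasurableSpace Φ] [DiscreteMeasurableSpace Φ]
  {Vn : ℕ → Finset V}
  (hmono : ∀ i j, i ≤ j → Vn i ⊆ Vn j)
  {τ : ∀ n : ℕ, Measure ({x // x ∈ Vn n} → Φ)}
  (hcons : ∀ i j (h : i ≤ j), (τ j).map (restr (hmono i j h)) = τ i)
  (hfin : ∀ n, τ n Set.univ ≠ ⊤)

include hmono in
omit [Countable Φ] [MeasurableSpace Φ] [DiscreteMeasurableSpace Φ] in
omit [Nonempty Φ] in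
lemma cylSets_diff_biUnion {s : Set (V → Φ)} (hs : s ∈ cylSets Vn Φ)
    {t : ℕ → Set (V → Φ)} (ht : ∀ j, t j ∈ cylSets Vn Φ) (k : ℕ) :
    s \ ⋃ j ∈ Finset.range k, t j ∈ cylSets Vn Φ := by
  classical
  obtain ⟨ns, Es, rfl⟩ := hs
  choose nt Et hte using ht
  set N : ℕ := ns ⊔ (Finset.range k).sup nt with hN
  have hns : ns ≤ N := le_sup_left
  have hnt : ∀ j ∈ Finset.range k, nt j ≤ N := fun j hj =>
    le_sup_of_le_right (Finset.le_sup hj)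
  set g : ℕ → Set ({x // x ∈ Vn N} → Φ) := fun j =>
    if h : nt j ≤ N then restr (hmono (nt j) N h) ⁻¹' Et j else ∅ with hg
  have hgj : ∀ j ∈ Finset.range k, t j = restrV (Vn N) ⁻¹' g j := by
    intro j hj
    rw [hg]
    simp only
    rw [dif_pos (hnt j hj), hte j, cyl_lift hmono (hnt j hj)]
  refine ⟨N, restr (hmono ns N hns) ⁻¹' Es \ ⋃ j ∈ Finset.range k, g j, ?_⟩
  rw [Set.preimage_diff, ← cyl_lift hmono hns]
  congr 1
  simp only [Set.preimage_iUnion]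
  exact Set.iUnion₂_congr hgj

include hmono hcons hfin in
lemma mu0_subadd (s : Set (V → Φ)) (hs : s ∈ cylSets Vn Φ) (t : ℕ → Set (V → Φ))
    (hsub : s ⊆ ⋃ i, t i) : mu0 Vn τ s ≤ ∑' i, mu0 Vn τ (t i) := by
  by_cases hall : ∀ i, t i ∈ cylSets Vn Φ
  · set r : ℕ → Set (V → Φ) := fun k => s \ ⋃ j ∈ Finset.range k, t j with hr
    have hrcyl : ∀ k, r k ∈ cylSets Vn Φ := fun k => cylSets_diff_biUnion hmono hs hall k
    have hrdec : ∀ j k, j ≤ k → r k ⊆ r j := fun j k hjk =>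
      Set.diff_subset_diff_right
        (Set.biUnion_subset_biUnion_left (Finset.range_subset_range.mpr hjk))
    have hrempty : ⋂ k, r k = ∅ := by
      rw [Set.eq_empty_iff_forall_notMem]
      intro x hx
      have hxk : ∀ k, x ∈ r k := Set.mem_iInter.mp hx
      have hxs : x ∈ s := (hxk 0).1
      obtain ⟨i, hi⟩ := Set.mem_iUnion.mp (hsub hxs)
      exact (hxk (i+1)).2
        (Set.mem_biUnion (Finset.mem_range.mpr i.lt_succ_self) hi)
    have key : ∀ k, mu0 Vn τ s ≤ (∑' j, mu0 Vn τ (t j)) + mu0 Vn τ (r k) := by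
      intro k
      have hsub' : s ⊆ (⋃ j ∈ Finset.range k, t j) ∪ r k := by
        intro x hx
        by_cases hxu : x ∈ ⋃ j ∈ Finset.range k, t j
        · exact Set.mem_union_left _ hxu
        · exact Set.mem_union_right _ ⟨hx, hxu⟩
      refine le_trans (mu0_le_sum hmono hcons k s t (r k) hs hall (hrcyl k) hsub') ?_
      gcongr
      exact ENNReal.sum_le_tsum _
    calc mu0 Vn τ s ≤ ⨅ k, ((∑' j, mu0 Vn τ (t j)) + mu0 Vn τ (r k)) := le_iInf key
      _ = (∑' j, mu0 Vn τ (t j)) + ⨅ k, mu0 Vn τ (r k) := by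
          rw [ENNReal.add_iInf]
      _ = ∑' j, mu0 Vn τ (t j) := by
          rw [mu0_iInf_eq_zero hmono hcons hfin r hrcyl hrdec hrempty, add_zero]
  · push_neg at hall
    obtain ⟨i, hi⟩ := hall
    have : (∑' j, mu0 Vn τ (t j)) = ⊤ :=
      eq_top_iff.mpr ((mu0_not_cyl hi) ▸ ENNReal.le_tsum i)
    rw [this]
    exact le_top

variable (Vn τ) in
/-- The outer measure induced by the cylinder content. -/
noncomputable def outerLim
    (hmono : ∀ i j, i ≤ j → Vn i ⊆ Vn j)
    (hcons : ∀ i j (h : i ≤ j), (τ j).map (restr (hmono i j h)) = τ i) :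
    OuterMeasure (V → Φ) :=
  OuterMeasure.ofFunction (mu0 Vn τ) (mu0_empty hmono hcons)

include hfin in
lemma outerLim_cyl {s : Set (V → Φ)} (hs : s ∈ cylSets Vn Φ) :
    outerLim Vn τ hmono hcons s = mu0 Vn τ s := by
  refine le_antisymm (OuterMeasure.ofFunction_le s) ?_
  rw [outerLim, OuterMeasure.ofFunction_apply]
  exact le_iInf fun t => le_iInf fun ht => mu0_subadd hmono hcons hfin s hs t ht

lemma isCaratheodory_cyl {s : Set (V → Φ)} (hs : s ∈ cylSets Vn Φ) :
    (outerLim Vn τ hmono hcons).caratheodory.MeasurableSet' s := by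
  refine OuterMeasure.ofFunction_caratheodory fun t => ?_
  by_cases ht : t ∈ cylSets Vn Φ
  · obtain ⟨i, Et, rfl⟩ := ht
    obtain ⟨j, Es, rfl⟩ := hs
    set N : ℕ := i ⊔ j with hN
    have hiN : i ≤ N := le_sup_left
    have hjN : j ≤ N := le_sup_right
    rw [cyl_lift hmono hiN, cyl_lift hmono hjN, ← Set.preimage_inter, ← Set.preimage_diff]
    rw [mu0_eq hmono hcons, mu0_eq hmono hcons, mu0_eq hmono hcons]
    exact (measure_inter_add_diff _ .of_discrete).le
  · rw [mu0_not_cyl ht]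
    exact le_top

variable (Vn τ) in
/-- The projective limit measure. -/
noncomputable def limMeasure
    (hmono : ∀ i j, i ≤ j → Vn i ⊆ Vn j)
    (hcons : ∀ i j (h : i ≤ j), (τ j).map (restr (hmono i j h)) = τ i)
    (hcover : ∀ x : V, ∃ n, x ∈ Vn n) :
    Measure (V → Φ) :=
  (outerLim Vn τ hmono hcons).toMeasure
    (le_of_eq_of_le (generateFrom_cylSets hcover)
      (MeasurableSpace.generateFrom_le fun s hs => isCaratheodory_cyl hmono hcons hs))

include hfin in
lemma limMeasure_map (hcover : ∀ x : V, ∃ n, x ∈ Vn n) (n : ℕ) :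
    (limMeasure Vn τ hmono hcons hcover).map (restrV (Vn n)) = τ n := by
  refine Measure.ext fun E hE => ?_
  rw [Measure.map_apply (measurable_restrV _) hE, limMeasure,
    toMeasure_apply _ _ (measurable_restrV (Vn n) hE),
    outerLim_cyl hmono hcons hfin ⟨n, E, rfl⟩, mu0_eq hmono hcons]

include hmono hcons hfin in
theorem exists_projLimit (hcover : ∀ x : V, ∃ n, x ∈ Vn n) :
    ∃ ν : Measure (V → Φ), ∀ n, ν.map (restrV (Vn n)) = τ n :=
  ⟨limMeasure Vn τ hmono hcons hcover, limMeasure_map hmono hcons hfin hcover⟩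

end Extension

/-- Let `(μₙ)` be a consistent family of measures on the `(Ω_{Vₙ}, B_{Vₙ})` and suppose `Ω`
is the union of pairwise disjoint cylinder sets `A_l = π_{V_{n_l}}⁻¹(A'_l)` of finite
measure. Then the family extends to a (necessarily unique) σ-additive measure `μ̄` on
`(Ω, B)` with `π_{Vₙ}(μ̄) = μₙ` for all `n` if and only if the cylinder set function `μ`
(with `μ(π_{V_m}⁻¹ E) = μ_m(E)`) satisfies `μ(E) = Σ_l μ(E ∩ A_l)` for every cylinder set
`E`; here `E ∩ A_l` is a cylinder with base in `Ω_{V_{max(m, n_l)}}`. -/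
theorem extension_iff_countably_additive_on_cover
    {Φ V : Type*} [Countable Φ] [Nonempty Φ] [MeasurableSpace Φ] [DiscreteMeasurableSpace Φ]
    [Countable V] [Infinite V]
    (Vn : ℕ → Finset V) (hmono : ∀ i j, i ≤ j → Vn i ⊆ Vn j)
    (hcover : ∀ x : V, ∃ n, x ∈ Vn n)
    (μ : ∀ n : ℕ, Measure ({x // x ∈ Vn n} → Φ))
    (hcons : ∀ i j (h : i ≤ j), (μ j).map (restr (hmono i j h)) = μ i)
    (nl : ℕ → ℕ) (A' : ∀ l : ℕ, Set ({x // x ∈ Vn (nl l)} → Φ))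
    (hA' : ∀ l, MeasurableSet (A' l)) (hfin : ∀ l, μ (nl l) (A' l) < ⊤)
    (hdisj : Pairwise (Function.onFun Disjoint
      (fun l => restrV (Vn (nl l)) ⁻¹' A' l : ℕ → Set (V → Φ))))
    (hAcover : ⋃ l : ℕ, restrV (Vn (nl l)) ⁻¹' A' l = (Set.univ : Set (V → Φ))) :
    (∃! ν : Measure (V → Φ), ∀ n, ν.map (restrV (Vn n)) = μ n) ↔
    (∀ (m : ℕ) (E : Set ({x // x ∈ Vn m} → Φ)), MeasurableSet E →
      μ m E = ∑' l : ℕ,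
        μ (max m (nl l))
          ((restr (hmono m (max m (nl l)) (le_max_left m (nl l))) ⁻¹' E) ∩
           (restr (hmono (nl l) (max m (nl l)) (le_max_right m (nl l))) ⁻¹' A' l))) := by
  constructor
  · rintro ⟨ν, hν, -⟩ m E hE
    have hmap : ∀ (k : ℕ) (S : Set ({x // x ∈ Vn k} → Φ)), ν (restrV (Vn k) ⁻¹' S) = μ k S := by
      intro k S
      rw [← hν k, Measure.map_apply (measurable_restrV _) .of_discrete]
    have hdecomp : restrV (Vn m) ⁻¹' E =
        ⋃ l, (restrV (Vn m) ⁻¹' E ∩ restrV (Vn (nl l)) ⁻¹' A' l) := by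
      rw [← Set.inter_iUnion, hAcover, Set.inter_univ]
    have hterm : ∀ l, restrV (Vn m) ⁻¹' E ∩ restrV (Vn (nl l)) ⁻¹' A' l =
        restrV (Vn (max m (nl l))) ⁻¹'
          ((restr (hmono m (max m (nl l)) (le_max_left m (nl l))) ⁻¹' E) ∩
           (restr (hmono (nl l) (max m (nl l)) (le_max_right m (nl l))) ⁻¹' A' l)) := by
      intro l
      rw [Set.preimage_inter, ← cyl_lift hmono (le_max_left m (nl l)),
        ← cyl_lift hmono (le_max_right m (nl l))]
    calc μ m E = ν (restrV (Vn m) ⁻¹' E) := (hmap m E).symm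
      _ = ∑' l, ν (restrV (Vn m) ⁻¹' E ∩ restrV (Vn (nl l)) ⁻¹' A' l) := by
          conv_lhs => rw [hdecomp]
          refine measure_iUnion ?_ ?_
          · intro i j hij
            exact (hdisj hij).mono Set.inter_subset_right Set.inter_subset_right
          · intro l
            exact ((measurable_restrV _) .of_discrete).inter
              ((measurable_restrV _) .of_discrete)
      _ = _ := by
          refine tsum_congr fun l => ?_
          rw [hterm l, hmap]
  · intro hsum
    classical
    set τl : ℕ → ∀ n : ℕ, Measure ({x // x ∈ Vn n} → Φ) := fun l n =>
      ((μ (max n (nl l))).restrict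
          ((restr (hmono (nl l) (max n (nl l)) (le_max_right n (nl l)))) ⁻¹' A' l)).map
        (restr (hmono n (max n (nl l)) (le_max_left n (nl l)))) with hτl
    have hτl_apply : ∀ l n (S : Set ({x // x ∈ Vn n} → Φ)),
        τl l n S = μ (max n (nl l))
          ((restr (hmono n (max n (nl l)) (le_max_left n (nl l))) ⁻¹' S) ∩
           (restr (hmono (nl l) (max n (nl l)) (le_max_right n (nl l))) ⁻¹' A' l)) := by
      intro l n S
      rw [hτl]
      simp only
      rw [Measure.map_apply (measurable_restr _) .of_discrete,
        Measure.restrict_apply .of_discrete]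
    have hτlcons : ∀ l i j (h : i ≤ j), (τl l j).map (restr (hmono i j h)) = τl l i := by
      intro l i j h
      refine Measure.ext fun S _ => ?_
      rw [Measure.map_apply (measurable_restr _) .of_discrete, hτl_apply, hτl_apply]
      have hmm : max i (nl l) ≤ max j (nl l) := max_le_max h le_rfl
      rw [← hcons (max i (nl l)) (max j (nl l)) hmm,
        Measure.map_apply (measurable_restr _) .of_discrete, Set.preimage_inter,
        ← Set.preimage_comp, ← Set.preimage_comp, ← Set.preimage_comp]
      rfl
    have hτlfin : ∀ l n, τl l n Set.univ ≠ ⊤ := by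
      intro l n
      rw [hτl_apply]
      have h1 : (restr (hmono n (max n (nl l)) (le_max_left n (nl l))) ⁻¹'
          (Set.univ : Set ({x // x ∈ Vn n} → Φ))) = Set.univ := by simp
      rw [h1, Set.univ_inter]
      have h2 : μ (max n (nl l))
          ((restr (hmono (nl l) (max n (nl l)) (le_max_right n (nl l)))) ⁻¹' A' l) =
          μ (nl l) (A' l) := by
        rw [← hcons (nl l) (max n (nl l)) (le_max_right n (nl l)),
          Measure.map_apply (measurable_restr _) .of_discrete]
      rw [h2]
      exact (hfin l).ne
    choose ν' hν' using fun l => exists_projLimit hmono (hτlcons l) (hτlfin l) hcover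
    set ν : Measure (V → Φ) := Measure.sum ν' with hνdef
    have hν : ∀ n, ν.map (restrV (Vn n)) = μ n := by
      intro n
      refine Measure.ext fun S hS => ?_
      rw [Measure.map_apply (measurable_restrV _) hS, hνdef,
        Measure.sum_apply _ (measurable_restrV _ hS)]
      have hterm : ∀ l, ν' l (restrV (Vn n) ⁻¹' S) = τl l n S := by
        intro l
        rw [← hν' l n, Measure.map_apply (measurable_restrV _) hS]
      rw [tsum_congr hterm, tsum_congr (fun l => hτl_apply l n S)]
      exact (hsum n S hS).symm
    refine ⟨ν, hν, ?_⟩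
    intro ν2 hν2
    refine Measure.ext_of_generateFrom_of_iUnion (cylSets Vn Φ)
      (fun l => restrV (Vn (nl l)) ⁻¹' A' l) (generateFrom_cylSets hcover)
      (isPiSystem_cylSets hmono) hAcover (fun l => ⟨nl l, A' l, rfl⟩) ?_ ?_
    · intro l
      have : ν2 (restrV (Vn (nl l)) ⁻¹' A' l) = μ (nl l) (A' l) := by
        rw [← hν2 (nl l), Measure.map_apply (measurable_restrV _) .of_discrete]
      rw [this]
      exact (hfin l).ne
    · rintro s ⟨k, S, rfl⟩
      have e1 : ν2 (restrV (Vn k) ⁻¹' S) = μ k S := by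
        rw [← hν2 k, Measure.map_apply (measurable_restrV _) .of_discrete]
      have e2 : ν (restrV (Vn k) ⁻¹' S) = μ k S := by
        rw [← hν k, Measure.map_apply (measurable_restrV _) .of_discrete]
      rw [e1, e2]
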